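/- arXiv:1111.0094 — 4 statements merged into one kernel-verified Lean document; each statement's English description precedes it below -/
import Mathlib

section
/- (Elder's theorem) For all positive integers n and k, the total number of occurrences of the part k among all partitions of n equals the number of pairs (λ, m) where λ is a partition of n and m is a part-size occurring at least k times in λ; i.e., Q_k(n) = V_k(n). -/
/-- Number of partitions of `n`. -/
def P (n : ℕ) : ℕ := Fintype.card (Nat.Partition n)

/-- Partition function extended to `ℤ`, zero for negative arguments. -/
def PZ (z : ℤ) : ℕ := if z < 0 then 0 else P z.toNat

/-- Total number of occurrences of the part `k` over all partitions of `n`. -/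
def Q (k n : ℕ) : ℕ := ∑ p : Nat.Partition n, Multiset.count k p.parts

/-- `Q` extended to `ℤ`, zero for non-positive arguments. -/
def QZ (k : ℕ) (z : ℤ) : ℕ := if z ≤ 0 then 0 else Q k z.toNat

/-- Sum over all partitions of `n` of the number of distinct part-sizes. -/
def S (n : ℕ) : ℕ := ∑ p : Nat.Partition n, p.parts.toFinset.card

/-- Number of pairs `(λ, m)` with `λ` a partition of `n` and `m` a part-size
occurring at least `k` times in `λ`. -/
def V (k n : ℕ) : ℕ :=
  ∑ p : Nat.Partition n, (p.parts.toFinset.filter (fun m => k ≤ p.parts.count m)).card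

/-- Adding `j` copies of `m` gives an equiv. -/
def addEquiv (a m j : ℕ) (hm : 0 < m) :
    Nat.Partition a ≃ {p : Nat.Partition (a + j * m) // j ≤ p.parts.count m} where
  toFun p := ⟨⟨p.parts + Multiset.replicate j m, by
      intro i hi
      rcases Multiset.mem_add.mp hi with h | h
      · exact p.parts_pos h
      · rcases Multiset.eq_of_mem_replicate h with rfl; exact hm, by
      simp [p.parts_sum, Multiset.sum_replicate, mul_comm]⟩, by
      simp⟩
  invFun q := ⟨q.1.parts - Multiset.replicate j m, by
      intro i hi
      exact q.1.parts_pos (Multiset.mem_of_le (tsub_le_self) hi), by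
      have hle : Multiset.replicate j m ≤ q.1.parts :=
        Multiset.le_count_iff_replicate_le.mp q.2
      have := congrArg Multiset.sum (tsub_add_cancel_of_le hle)
      rw [Multiset.sum_add, Multiset.sum_replicate, smul_eq_mul, q.1.parts_sum] at this
      omega⟩
  left_inv p := by
    ext1
    simp
  right_inv q := by
    have hle : Multiset.replicate j m ≤ q.1.parts :=
      Multiset.le_count_iff_replicate_le.mp q.2
    apply Subtype.ext
    ext1
    simp [tsub_add_cancel_of_le hle]

lemma card_count_ge (n m j : ℕ) (hm : 0 < m) :
    Fintype.card {p : Nat.Partition n // j ≤ p.parts.count m} =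
      if j * m ≤ n then P (n - j * m) else 0 := by
  split_ifs with h
  · have hn : n = (n - j * m) + j * m := by omega
    rw [P]
    conv_lhs => rw [hn]
    exact (Fintype.card_congr (addEquiv (n - j * m) m j hm)).symm
  · have : IsEmpty {p : Nat.Partition n // j ≤ p.parts.count m} := by
      constructor
      rintro ⟨p, hp⟩
      have hle : Multiset.replicate j m ≤ p.parts :=
        Multiset.le_count_iff_replicate_le.mp hp
      have := congrArg Multiset.sum (tsub_add_cancel_of_le hle)
      rw [Multiset.sum_add, Multiset.sum_replicate, smul_eq_mul, p.parts_sum] at this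
      omega
    simp [Fintype.card_eq_zero]

lemma count_mul_le (n m : ℕ) (p : Nat.Partition n) : p.parts.count m * m ≤ n := by
  have hle : Multiset.replicate (p.parts.count m) m ≤ p.parts :=
    Multiset.le_count_iff_replicate_le.mp le_rfl
  have := congrArg Multiset.sum (tsub_add_cancel_of_le hle)
  rw [Multiset.sum_add, Multiset.sum_replicate, smul_eq_mul, p.parts_sum] at this
  omega

lemma sum_ite_card (n c : ℕ) (hc : c ≤ n) :
    ∑ j ∈ Finset.Icc 1 n, (if j ≤ c then 1 else 0) = c := by
  rw [← Finset.card_filter]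
  have : (Finset.Icc 1 n).filter (fun j => j ≤ c) = Finset.Icc 1 c := by
    ext j; simp only [Finset.mem_filter, Finset.mem_Icc]; omega
  rw [this, Nat.card_Icc]; omega

theorem stmt_4 (n k : ℕ) (hn : 0 < n) (hk : 0 < k) : Q k n = V k n := by
  have hQ : Q k n = ∑ j ∈ Finset.Icc 1 n,
      Fintype.card {p : Nat.Partition n // j ≤ p.parts.count k} := by
    rw [Q]
    have h1 : ∀ p : Nat.Partition n, Multiset.count k p.parts =
        ∑ j ∈ Finset.Icc 1 n, (if j ≤ p.parts.count k then 1 else 0) := by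
      intro p
      rw [sum_ite_card]
      have := count_mul_le n k p
      nlinarith
    rw [Finset.sum_congr rfl fun p _ => h1 p, Finset.sum_comm]
    refine Finset.sum_congr rfl fun j _ => ?_
    rw [← Finset.card_filter, Fintype.card_subtype]
  have hV : V k n = ∑ m ∈ Finset.Icc 1 n,
      Fintype.card {p : Nat.Partition n // k ≤ p.parts.count m} := by
    rw [V]
    have h1 : ∀ p : Nat.Partition n,
        (p.parts.toFinset.filter (fun m => k ≤ p.parts.count m)).card =
        ∑ m ∈ Finset.Icc 1 n, (if k ≤ p.parts.count m then 1 else 0) := by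
      intro p
      rw [← Finset.card_filter]
      congr 1
      ext m
      simp only [Finset.mem_filter, Multiset.mem_toFinset, Finset.mem_Icc]
      constructor
      · rintro ⟨hm, hc⟩
        have h1m := p.parts_pos hm
        have h2m : m ≤ n := by
          have := count_mul_le n m p
          have hc1 : 1 ≤ p.parts.count m := Multiset.one_le_count_iff_mem.mpr hm
          nlinarith
        exact ⟨⟨h1m, h2m⟩, hc⟩
      · rintro ⟨-, hc⟩
        exact ⟨Multiset.count_pos.mp (by omega), hc⟩
    rw [Finset.sum_congr rfl fun p _ => h1 p, Finset.sum_comm]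
    refine Finset.sum_congr rfl fun m _ => ?_
    rw [← Finset.card_filter, Fintype.card_subtype]
  rw [hQ, hV]
  refine Finset.sum_congr rfl fun j hj => ?_
  simp only [Finset.mem_Icc] at hj
  rw [card_count_ge n k j hk, card_count_ge n j k (by omega), mul_comm]
end

section
/- The generating function identity Σ_{m≥0} Q_k(m) x^m = (x^k / (1 - x^k)) · Π_{n≥1} 1/(1 - x^n) holds as an identity of formal power series, for every positive integer k. -/
lemma Q_eq_zero_of_lt {k m : ℕ} (h : m < k) : Q k m = 0 := by
  unfold Q
  refine Finset.sum_eq_zero fun p _ => ?_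
  rw [Multiset.count_eq_zero]
  intro hmem
  have : k ≤ p.parts.sum := Multiset.single_le_sum (fun x _ => Nat.zero_le x) _ hmem
  rw [p.parts_sum] at this
  omega

def addk (k n : ℕ) (hk : 0 < k) (p : Nat.Partition n) : Nat.Partition (n + k) :=
  ⟨k ::ₘ p.parts, by
    intro i hi
    rcases Multiset.mem_cons.1 hi with h | h
    · omega
    · exact p.parts_pos h, by simp [p.parts_sum, Nat.add_comm]⟩

def delk (k n : ℕ) (q : Nat.Partition (n + k)) : Nat.Partition n :=
  if h : k ∈ q.parts then
    ⟨q.parts.erase k, fun {i} hi => q.parts_pos (Multiset.mem_of_mem_erase hi), by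
      have h2 : (k ::ₘ q.parts.erase k).sum = n + k := by
        rw [Multiset.cons_erase h, q.parts_sum]
      simp only [Multiset.sum_cons] at h2
      omega⟩
  else default

lemma Qrec (k n : ℕ) (hk : 0 < k) : Q k (n + k) = Q k n + P n := by
  unfold Q
  rw [← Finset.sum_filter_of_ne
      (p := fun p : Nat.Partition (n + k) => k ∈ p.parts)
      (fun p _ h => Multiset.count_ne_zero.mp h)]
  have hb : ∑ x ∈ Finset.filter (fun p : Nat.Partition (n+k) => k ∈ p.parts) Finset.univ,
      Multiset.count k x.parts
      = ∑ p : Nat.Partition n, (Multiset.count k p.parts + 1) := by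
    refine Finset.sum_nbij' (delk k n) (addk k n hk)
      (fun a _ => Finset.mem_univ _)
      (fun a _ => Finset.mem_filter.2 ⟨Finset.mem_univ _, Multiset.mem_cons_self _ _⟩)
      (fun a ha => ?_) (fun a _ => ?_) (fun a ha => ?_)
    · -- addk (delk a) = a
      have hmem : k ∈ a.parts := (Finset.mem_filter.1 ha).2
      ext1
      simp only [delk, dif_pos hmem, addk]
      exact Multiset.cons_erase hmem
    · -- delk (addk a) = a
      ext1
      rw [delk, dif_pos (show k ∈ (addk k n hk a).parts from Multiset.mem_cons_self k a.parts)]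
      exact Multiset.erase_cons_head k a.parts
    · -- count equality
      have hmem : k ∈ a.parts := (Finset.mem_filter.1 ha).2
      have h1 : 1 ≤ Multiset.count k a.parts := Multiset.one_le_count_iff_mem.2 hmem
      simp only [delk, dif_pos hmem, Multiset.count_erase_self]
      omega
  rw [hb, Finset.sum_add_distrib]
  simp [P, Finset.card_univ]

open PowerSeries in
theorem stmt_11 (k : ℕ) (hk : 0 < k) :
    PowerSeries.mk (fun m => (Q k m : ℚ)) =
      (X ^ k) * (1 - X ^ k : PowerSeries ℚ)⁻¹ * PowerSeries.mk (fun m => (P m : ℚ)) := by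
  have hc : constantCoeff (1 - X ^ k : PowerSeries ℚ) ≠ 0 := by
    simp [map_sub, constantCoeff_X, zero_pow hk.ne']
  have hunit : (1 - X ^ k : PowerSeries ℚ)⁻¹ * (1 - X ^ k) = 1 :=
    PowerSeries.inv_mul_cancel _ hc
  have key : (1 - X ^ k : PowerSeries ℚ) * PowerSeries.mk (fun m => (Q k m : ℚ)) =
      X ^ k * PowerSeries.mk (fun m => (P m : ℚ)) := by
    ext m
    rw [sub_mul, one_mul, map_sub, coeff_X_pow_mul', coeff_X_pow_mul']
    by_cases h : k ≤ m
    · obtain ⟨n, rfl⟩ : ∃ n, m = n + k := ⟨m - k, by omega⟩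
      simp only [if_pos h, coeff_mk, Nat.add_sub_cancel]
      have := Qrec k n hk
      push_cast [this]
      ring
    · simp only [if_neg h, coeff_mk, Q_eq_zero_of_lt (Nat.lt_of_not_le h)]
      simp
  calc PowerSeries.mk (fun m => (Q k m : ℚ))
      = ((1 - X ^ k : PowerSeries ℚ)⁻¹ * (1 - X ^ k)) * PowerSeries.mk (fun m => (Q k m : ℚ)) := by
        rw [hunit, one_mul]
    _ = (1 - X ^ k : PowerSeries ℚ)⁻¹ * ((1 - X ^ k) * PowerSeries.mk (fun m => (Q k m : ℚ))) := by
        ring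
    _ = (X ^ k) * (1 - X ^ k : PowerSeries ℚ)⁻¹ * PowerSeries.mk (fun m => (P m : ℚ)) := by
        rw [key]; ring
end

section
/- For all positive integers n and k, the number of partitions of n+k that contain the part k at least once, plus the number of pairs (λ, m) with λ a partition of n and m a part occurring at least k times in λ, equals Q_k(n+k); equivalently P(n) + V_k(n) = Q_k(n+k). -/
open Finset Multiset

/-- Replace `b` copies of `a` by `a` copies of `b` in a partition. -/
def swapPart {n : ℕ} (p : Nat.Partition n) (a b : ℕ) (hb : 0 < b)
    (h : Multiset.replicate b a ≤ p.parts) : Nat.Partition n where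
  parts := Multiset.replicate a b + (p.parts - Multiset.replicate b a)
  parts_pos := by
    intro i hi
    rcases Multiset.mem_add.1 hi with hi | hi
    · rw [Multiset.eq_of_mem_replicate hi]; exact hb
    · exact p.parts_pos (Multiset.mem_of_le (tsub_le_self) hi)
  parts_sum := by
    have h2 : (p.parts - Multiset.replicate b a) + Multiset.replicate b a = p.parts :=
      tsub_add_cancel_of_le h
    have h3 := congrArg Multiset.sum h2
    rw [Multiset.sum_add] at h3 ⊢
    simp only [Multiset.sum_replicate, smul_eq_mul] at h3 ⊢
    have h4 := p.parts_sum
    have h5 : a * b = b * a := Nat.mul_comm a b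
    omega

lemma swapPart_parts {n : ℕ} (p : Nat.Partition n) (a b : ℕ) (hb : 0 < b)
    (h : Multiset.replicate b a ≤ p.parts) :
    (swapPart p a b hb h).parts = Multiset.replicate a b + (p.parts - Multiset.replicate b a) :=
  rfl

lemma replicate_le_swapPart {n : ℕ} (p : Nat.Partition n) (a b : ℕ) (hb : 0 < b)
    (h : Multiset.replicate b a ≤ p.parts) :
    Multiset.replicate a b ≤ (swapPart p a b hb h).parts :=
  Multiset.le_add_right _ _

lemma count_swapPart_self {n : ℕ} (p : Nat.Partition n) (a b : ℕ) (hb : 0 < b)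
    (h : Multiset.replicate b a ≤ p.parts) :
    a ≤ Multiset.count b (swapPart p a b hb h).parts := by
  have := Multiset.count_le_of_le b (replicate_le_swapPart p a b hb h)
  simpa using this

lemma swapPart_swapPart {n : ℕ} (p : Nat.Partition n) (a b : ℕ) (ha : 0 < a) (hb : 0 < b)
    (h : Multiset.replicate b a ≤ p.parts)
    (h' : Multiset.replicate a b ≤ (swapPart p a b hb h).parts) :
    swapPart (swapPart p a b hb h) b a ha h' = p := by
  ext1
  rw [swapPart_parts, swapPart_parts, add_tsub_cancel_left]
  exact add_tsub_cancel_of_le h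

section elder

variable {n k : ℕ}

lemma memA_pos {x : (_ : Nat.Partition n) × ℕ}
    (hx : x ∈ Finset.univ.sigma fun p => Finset.Icc 1 (Multiset.count k p.parts)) :
    0 < x.2 := by
  have := (Finset.mem_sigma.1 hx).2
  exact (Finset.mem_Icc.1 this).1

lemma memA_le {x : (_ : Nat.Partition n) × ℕ}
    (hx : x ∈ Finset.univ.sigma fun p => Finset.Icc 1 (Multiset.count k p.parts)) :
    Multiset.replicate x.2 k ≤ x.1.parts := by
  have := (Finset.mem_sigma.1 hx).2
  exact Multiset.le_count_iff_replicate_le.1 (Finset.mem_Icc.1 this).2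

lemma memB_le {y : (_ : Nat.Partition n) × ℕ}
    (hy : y ∈ Finset.univ.sigma fun p =>
      p.parts.toFinset.filter (fun m => k ≤ p.parts.count m)) :
    Multiset.replicate k y.2 ≤ y.1.parts := by
  have := (Finset.mem_sigma.1 hy).2
  exact Multiset.le_count_iff_replicate_le.1 (Finset.mem_filter.1 this).2

lemma memB_pos {y : (_ : Nat.Partition n) × ℕ}
    (hy : y ∈ Finset.univ.sigma fun p =>
      p.parts.toFinset.filter (fun m => k ≤ p.parts.count m)) :
    0 < y.2 := by
  have := (Finset.mem_sigma.1 hy).2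
  exact y.1.parts_pos (Multiset.mem_toFinset.1 (Finset.mem_filter.1 this).1)

/-- Elder's theorem: `Q k n = V k n`. -/
lemma elder (k n : ℕ) (hk : 0 < k) : Q k n = V k n := by
  classical
  have hQ : Q k n =
      ((Finset.univ : Finset (Nat.Partition n)).sigma
        (fun p => Finset.Icc 1 (Multiset.count k p.parts))).card := by
    rw [Finset.card_sigma]; simp [Q, Nat.card_Icc]
  have hV : V k n =
      ((Finset.univ : Finset (Nat.Partition n)).sigma
        (fun p => p.parts.toFinset.filter (fun m => k ≤ p.parts.count m))).card := by
    rw [Finset.card_sigma]; simp [V]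
  rw [hQ, hV]
  refine Finset.card_bij'
    (fun x hx => ⟨swapPart x.1 k x.2 (memA_pos hx) (memA_le hx), x.2⟩)
    (fun y hy => ⟨swapPart y.1 y.2 k hk (memB_le hy), y.2⟩)
    ?_ ?_ ?_ ?_
  · intro a ha
    refine Finset.mem_sigma.2 ⟨Finset.mem_univ _, Finset.mem_filter.2 ⟨?_, ?_⟩⟩
    · rw [Multiset.mem_toFinset]
      exact Multiset.count_pos.1
        (lt_of_lt_of_le hk (count_swapPart_self a.1 k a.2 (memA_pos ha) (memA_le ha)))
    · exact count_swapPart_self a.1 k a.2 (memA_pos ha) (memA_le ha)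
  · intro b hb
    refine Finset.mem_sigma.2 ⟨Finset.mem_univ _, Finset.mem_Icc.2 ⟨memB_pos (y := b) hb, ?_⟩⟩
    exact count_swapPart_self b.1 b.2 k hk (memB_le hb)
  · intro a ha
    obtain ⟨p, j⟩ := a
    exact Sigma.ext (swapPart_swapPart p k j hk (memA_pos ha) (memA_le ha) (replicate_le_swapPart p k j (memA_pos ha) (memA_le ha))) HEq.rfl
  · intro b hb
    obtain ⟨q, m⟩ := b
    exact Sigma.ext (swapPart_swapPart q m k (memB_pos hb) hk (memB_le hb) (replicate_le_swapPart q m k hk (memB_le hb))) HEq.rfl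

end elder

/-- Adding/removing one part `k`: `Q k (n+k) = P n + Q k n`. -/
lemma step (k n : ℕ) (hk : 0 < k) : Q k (n + k) = P n + Q k n := by
  classical
  have h1 : Q k (n + k) = ∑ p ∈ (Finset.univ : Finset (Nat.Partition (n+k))).filter
      (fun p => k ∈ p.parts), Multiset.count k p.parts := by
    rw [Finset.sum_filter_of_ne]
    · rfl
    · intro p _ h
      exact Multiset.count_pos.1 (Nat.pos_of_ne_zero h)
  rw [h1]
  have h2 : ∑ p ∈ (Finset.univ : Finset (Nat.Partition (n+k))).filter
      (fun p => k ∈ p.parts), Multiset.count k p.parts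
      = ∑ p : Nat.Partition n, (Multiset.count k p.parts + 1) := by
    refine Finset.sum_bij'
      (fun p hp => ⟨p.parts.erase k, ?_, ?_⟩)
      (fun q _ => ⟨k ::ₘ q.parts, ?_, ?_⟩) ?_ ?_ ?_ ?_ ?_
    · intro i hi
      exact p.parts_pos (Multiset.mem_of_mem_erase hi)
    · have hkp : k ∈ p.parts := (Finset.mem_filter.1 hp).2
      have := congrArg Multiset.sum (Multiset.cons_erase hkp)
      rw [Multiset.sum_cons, p.parts_sum] at this
      omega
    · intro i hi
      rcases Multiset.mem_cons.1 hi with h | h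
      · exact h ▸ hk
      · exact q.parts_pos h
    · rw [Multiset.sum_cons, q.parts_sum, add_comm]
    · intro a _; exact Finset.mem_univ _
    · intro q _
      refine Finset.mem_filter.2 ⟨Finset.mem_univ _, ?_⟩
      exact Multiset.mem_cons_self _ _
    · intro p hp
      ext1
      simp only
      exact Multiset.cons_erase (Finset.mem_filter.1 hp).2
    · intro q _
      ext1
      simp only
      exact Multiset.erase_cons_head _ _
    · intro p hp
      have hkp : k ∈ p.parts := (Finset.mem_filter.1 hp).2
      simp only
      rw [← Multiset.count_cons_self k (p.parts.erase k), Multiset.cons_erase hkp]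
  rw [h2, Finset.sum_add_distrib, Finset.sum_const, smul_eq_mul, mul_one, Finset.card_univ]
  rw [Nat.add_comm]
  rfl

theorem stmt_12 (n k : ℕ) (hn : 0 < n) (hk : 0 < k) :
    P n + V k n = Q k (n + k) := by
  rw [step k n hk, elder k n hk]
end

section
/- For all positive integers n, k, and r, Q_k(n) = Σ_{i=0}^{r-1} Q_{rk}(n + ik), i.e., the total number of occurrences of the part k among partitions of n equals the sum over i from 0 to r-1 of the number of occurrences of the part rk among partitions of n + ik. -/
/-- Adding a part `k` gives an equivalence between partitions of `n - k` and
partitions of `n` containing `k`. -/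
def addPartEquiv (k n : ℕ) (hk : 0 < k) (hkn : k ≤ n) :
    Nat.Partition (n - k) ≃ {p : Nat.Partition n // k ∈ p.parts} where
  toFun q := ⟨⟨k ::ₘ q.parts, by
      intro i hi
      rcases Multiset.mem_cons.1 hi with h | h
      · omega
      · exact q.parts_pos h, by
      rw [Multiset.sum_cons, q.parts_sum]; omega⟩, Multiset.mem_cons_self _ _⟩
  invFun p := ⟨p.1.parts.erase k, fun {i} hi => p.1.parts_pos (Multiset.mem_of_mem_erase hi), by
      have h := p.1.parts_sum
      have h2 : (k ::ₘ p.1.parts.erase k).sum = p.1.parts.sum := by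
        rw [Multiset.cons_erase p.2]
      rw [Multiset.sum_cons] at h2
      omega⟩
  left_inv q := by
    ext1
    simp [Multiset.erase_cons_head]
  right_inv p := by
    ext1
    simp [Multiset.cons_erase p.2]

lemma Q_rec (k n : ℕ) (hk : 0 < k) (hkn : k ≤ n) :
    Q k n = P (n - k) + Q k (n - k) := by
  classical
  have h1 : Q k n = ∑ p ∈ Finset.univ.filter (fun p : Nat.Partition n => k ∈ p.parts),
      Multiset.count k p.parts := by
    rw [Q]
    rw [Finset.sum_filter_of_ne]
    intro p _ hp
    by_contra hmem
    exact hp (Multiset.count_eq_zero.2 hmem)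
  have h2 : ∑ p ∈ Finset.univ.filter (fun p : Nat.Partition n => k ∈ p.parts),
      Multiset.count k p.parts
      = ∑ p : {p : Nat.Partition n // k ∈ p.parts}, Multiset.count k p.1.parts :=
    Finset.sum_subtype _ (by simp) _
  have h3 : ∑ p : {p : Nat.Partition n // k ∈ p.parts}, Multiset.count k p.1.parts
      = ∑ q : Nat.Partition (n - k), (Multiset.count k q.parts + 1) := by
    rw [← Fintype.sum_equiv (addPartEquiv k n hk hkn)
      (fun q => Multiset.count k q.parts + 1) (fun p => Multiset.count k p.1.parts)]
    intro q
    simp [addPartEquiv]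
  rw [h1, h2, h3, Finset.sum_add_distrib]
  simp [Q, P, add_comm]

lemma Q_small (k n : ℕ) (hnk : n < k) : Q k n = 0 := by
  rw [Q]
  apply Finset.sum_eq_zero
  intro p _
  rw [Multiset.count_eq_zero]
  intro hmem
  have : k ≤ p.parts.sum := Multiset.single_le_sum (fun x _ => Nat.zero_le x) k hmem
  rw [p.parts_sum] at this
  omega

lemma Q_formula (k : ℕ) (hk : 0 < k) :
    ∀ n T : ℕ, n ≤ T → Q k n = ∑ t ∈ Finset.range T, PZ ((n : ℤ) - (t + 1) * k) := by
  intro n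
  induction n using Nat.strong_induction_on with
  | _ n ih =>
    intro T hT
    by_cases hnk : n < k
    · rw [Q_small k n hnk]
      symm
      apply Finset.sum_eq_zero
      intro t _
      rw [PZ, if_pos]
      have h1 : (k : ℤ) ≤ (t + 1) * k := by
        nlinarith [Int.natCast_nonneg t, Int.natCast_nonneg k]
      have h2 : (n : ℤ) < k := by exact_mod_cast hnk
      omega
    · push_neg at hnk
      have hT1 : 1 ≤ T := le_trans (le_trans hk hnk) hT
      rw [Q_rec k n hk hnk]
      obtain ⟨T', rfl⟩ : ∃ T', T = T' + 1 := ⟨T - 1, by omega⟩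
      rw [Finset.sum_range_succ' (fun t => PZ ((n : ℤ) - (t + 1) * k)) T']
      have hrec : Q k (n - k) = ∑ t ∈ Finset.range T', PZ (((n - k : ℕ) : ℤ) - (t + 1) * k) :=
        ih (n - k) (by omega) T' (by omega)
      have hcast : ∀ t : ℕ, ((n - k : ℕ) : ℤ) - (t + 1) * k = (n : ℤ) - (t + 1 + 1) * k := by
        intro t
        have : ((n - k : ℕ) : ℤ) = (n : ℤ) - k := by omega
        rw [this]; ring
      rw [add_comm (P (n - k))]
      congr 1
      · rw [hrec]
        apply Finset.sum_congr rfl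
        intro t _
        rw [hcast t]
        congr 2
      · rw [PZ, if_neg (by push_cast; omega)]
        congr 1
        push_cast
        omega

lemma sum_range_mul' {M : Type*} [AddCommMonoid M] (f : ℕ → M) (m r : ℕ) :
    ∑ t ∈ Finset.range (m * r), f t = ∑ s ∈ Finset.range m, ∑ j ∈ Finset.range r, f (s * r + j) := by
  induction m with
  | zero => simp
  | succ m ih =>
    rw [Finset.sum_range_succ, ← ih, Nat.succ_mul, Finset.sum_range_add f (m * r) r]

theorem stmt_17 (n k r : ℕ) (hn : 0 < n) (hk : 0 < k) (hr : 0 < r) :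
    Q k n = ∑ i ∈ Finset.range r, Q (r * k) (n + i * k) := by
  have hrk : 0 < r * k := Nat.mul_pos hr hk
  set M : ℕ := n + r * k with hM
  have hMr : n ≤ M * r := le_trans (Nat.le_mul_of_pos_right n hr)
    (Nat.mul_le_mul_right r (Nat.le_add_right n (r * k)))
  have hL : Q k n = ∑ t ∈ Finset.range (M * r), PZ ((n : ℤ) - (t + 1) * k) :=
    Q_formula k hk n (M * r) hMr
  have hR : ∀ i ∈ Finset.range r, Q (r * k) (n + i * k)
      = ∑ s ∈ Finset.range M, PZ (((n + i * k : ℕ) : ℤ) - (s + 1) * (r * k)) := by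
    intro i hi
    have hir : i < r := Finset.mem_range.1 hi
    exact Q_formula (r * k) hrk (n + i * k) M
      (Nat.add_le_add_left (Nat.mul_le_mul_right k hir.le) n)
  rw [Finset.sum_congr rfl hR, hL, sum_range_mul', Finset.sum_comm,
    ← Finset.sum_range_reflect
      (fun i => ∑ s ∈ Finset.range M, PZ (((n + i * k : ℕ) : ℤ) - (s + 1) * (r * k))) r]
  apply Finset.sum_congr rfl
  intro j hj
  have hjr : j < r := Finset.mem_range.1 hj
  apply Finset.sum_congr rfl
  intro s _
  congr 1
  have hc : ((r - 1 - j : ℕ) : ℤ) = (r : ℤ) - 1 - j := by omega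
  push_cast [hc]
  ring
end
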